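/- Fix 0 < ε < 1 and s > 0. Define F₋₁ on D(−1,ε) ∖ ℝ by F₋₁(z) = −2i·s^{−3/2}·(θ₂(sz) − θ_{2,+}(−s)) for Im z > 0 and F₋₁(z) = −2i·s^{−3/2}·(−θ₂(sz) + θ_{2,−}(−s)) for Im z < 0, and define F₁ on D(1,ε) ∖ ℝ by F₁(z) = −2i·s^{−3/2}·(θ₁(sz) − θ_{1,+}(s)) for Im z > 0 and F₁(z) = −2i·s^{−3/2}·(−θ₁(sz) + θ_{1,−}(s)) for Im z < 0. Then F₋₁ extends to an analytic function on the disc D(−1,ε) with F₋₁(−1) = 0 and F₋₁(z) = 2(r₂ − s₂/s)(z+1) + O((z+1)²) as z → −1, and F₁ extends to an analytic function on the disc D(1,ε) with F₁(1) = 0 and F₁(z) = 2(r₁ − s₁/s)(z−1) + O((z−1)²) as z → 1. -/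

import Mathlib

open Complex Filter Topology Set Asymptotics

/-- `θ₁(z) = (2/3)r₁(-z)^{3/2} + 2s₁(-z)^{1/2}`, principal branches. -/
noncomputable def theta1 (r₁ s₁ : ℝ) (z : ℂ) : ℂ :=
  (2/3 : ℂ) * r₁ * (-z) ^ ((3:ℂ)/2) + 2 * (s₁ : ℂ) * (-z) ^ ((1:ℂ)/2)

/-- `θ₂(z) = (2/3)r₂ z^{3/2} + 2s₂ z^{1/2}`, principal branches. -/
noncomputable def theta2 (r₂ s₂ : ℝ) (z : ℂ) : ℂ :=
  (2/3 : ℂ) * r₂ * z ^ ((3:ℂ)/2) + 2 * (s₂ : ℂ) * z ^ ((1:ℂ)/2)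

section Helpers

lemma my_exp_pi_div_two : Complex.exp ((Real.pi/2 : ℝ) * I) = I := by
  rw [Complex.exp_mul_I]
  norm_cast
  rw [Real.cos_pi_div_two, Real.sin_pi_div_two]
  simp

lemma my_log_neg_pos {w : ℂ} (hw : 0 < w.im) :
    Complex.log (-w) = Complex.log w - Real.pi * I := by
  apply Complex.ext
  · simp [Complex.log_re]
  · simp [Complex.log_im, Complex.arg_neg_eq_arg_sub_pi_of_im_pos hw]

lemma my_log_neg_neg {w : ℂ} (hw : w.im < 0) :
    Complex.log (-w) = Complex.log w + Real.pi * I := by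
  apply Complex.ext
  · simp [Complex.log_re]
  · simp [Complex.log_im, Complex.arg_neg_eq_arg_add_pi_of_im_neg hw]

lemma my_ne_zero_of_im_pos {w : ℂ} (hw : 0 < w.im) : w ≠ 0 := by
  intro h; simp [h] at hw

lemma my_ne_zero_of_im_neg {w : ℂ} (hw : w.im < 0) : w ≠ 0 := by
  intro h; simp [h] at hw

/-- `(-w)^{1/2} = -i w^{1/2}` for `Im w > 0`. -/
lemma neg_cpow_half_pos {w : ℂ} (hw : 0 < w.im) :
    (-w) ^ ((1:ℂ)/2) = -I * w ^ ((1:ℂ)/2) := by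
  have hw0 : w ≠ 0 := my_ne_zero_of_im_pos hw
  rw [Complex.cpow_def_of_ne_zero (neg_ne_zero.2 hw0), Complex.cpow_def_of_ne_zero hw0,
    my_log_neg_pos hw, sub_mul, Complex.exp_sub]
  have h2 : (Real.pi : ℂ) * I * (1/2) = (Real.pi/2 : ℝ) * I := by push_cast; ring
  rw [h2, my_exp_pi_div_two]
  field_simp
  linear_combination Complex.I_sq

/-- `(-w)^{1/2} = i w^{1/2}` for `Im w < 0`. -/
lemma neg_cpow_half_neg {w : ℂ} (hw : w.im < 0) :
    (-w) ^ ((1:ℂ)/2) = I * w ^ ((1:ℂ)/2) := by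
  have hw0 : w ≠ 0 := my_ne_zero_of_im_neg hw
  rw [Complex.cpow_def_of_ne_zero (neg_ne_zero.2 hw0), Complex.cpow_def_of_ne_zero hw0,
    my_log_neg_neg hw, add_mul, Complex.exp_add]
  have h2 : (Real.pi : ℂ) * I * (1/2) = (Real.pi/2 : ℝ) * I := by push_cast; ring
  rw [h2, my_exp_pi_div_two]
  ring

/-- split a positive real factor out of a cpow -/
lemma my_split {s : ℝ} (hs : 0 < s) {w : ℂ} (hw : w ≠ 0) (c : ℂ) :
    ((s:ℂ) * w) ^ c = (s:ℂ) ^ c * w ^ c := by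
  have hs0 : (s:ℂ) ≠ 0 := Complex.ofReal_ne_zero.2 hs.ne'
  rw [Complex.cpow_def_of_ne_zero (mul_ne_zero hs0 hw), Complex.cpow_def_of_ne_zero hs0,
    Complex.cpow_def_of_ne_zero hw, Complex.log_ofReal_mul hs hw, Complex.ofReal_log hs.le,
    add_mul, Complex.exp_add]

/-- `w^{3/2} = w^{1/2} * w` -/
lemma my_three_half {w : ℂ} (hw : w ≠ 0) : w ^ ((3:ℂ)/2) = w ^ ((1:ℂ)/2) * w := by
  have : (3:ℂ)/2 = 1/2 + 1 := by norm_num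
  rw [this, Complex.cpow_add _ _ hw, Complex.cpow_one]

/-- second-order Taylor bound for an analytic function -/
lemma my_taylor2 {f : ℂ → ℂ} {x : ℂ} (hf : AnalyticAt ℂ f x) :
    (fun z => f z - f x - deriv f x * (z - x)) =O[𝓝 x] fun z => (z - x) ^ 2 := by
  obtain ⟨p, hp⟩ := hf
  have h := hp.isBigO_sub_partialSum_pow 2
  have hc0 : p.coeff 0 = f x := hp.coeff_zero (fun _ => 1)
  have hps : ∀ y : ℂ, p.partialSum 2 y = f x + deriv f x * y := by
    intro y
    rw [hp.deriv]
    simp [FormalMultilinearSeries.partialSum, Finset.sum_range_succ,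
      FormalMultilinearSeries.apply_eq_pow_smul_coeff, smul_eq_mul, hc0]
    ring
  have ht : Tendsto (fun z : ℂ => z - x) (𝓝 x) (𝓝 0) := by
    have := ((continuous_id.sub continuous_const).tendsto x :
      Tendsto (fun z : ℂ => z - x) (𝓝 x) (𝓝 (x - x)))
    exact tendsto_sub_nhds_zero_iff.2 tendsto_id
  have h2 := h.comp_tendsto ht
  simp only [Function.comp_def, hps] at h2
  have h3 : (fun z : ℂ => f z - f x - deriv f x * (z - x))
      =O[𝓝 x] fun z : ℂ => ‖z - x‖ ^ 2 := by
    refine h2.congr_left fun z => ?_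
    rw [add_sub_cancel]
    ring
  exact h3.trans (Asymptotics.isBigO_of_le _ fun z => by simp [norm_pow])

end Helpers

/-- The conformal maps `F₋₁` near `-1` and `F₁` near `1`: they extend analytically to the
full discs, vanish at the centres, and have the stated linear terms. -/
theorem gap_tacnode_conformal_maps (r₁ r₂ s₁ s₂ : ℝ)
    (hr₁ : 0 < r₁) (hr₂ : 0 < r₂) (ε s : ℝ) (hε0 : 0 < ε) (hε1 : ε < 1) (hs : 0 < s) :
    ∃ θ2p θ2m θ1p θ1m : ℂ,
      Tendsto (fun t : ℝ => theta2 r₂ s₂ ((-s:ℂ) + t * Complex.I)) (𝓝[>] (0:ℝ)) (𝓝 θ2p) ∧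
      Tendsto (fun t : ℝ => theta2 r₂ s₂ ((-s:ℂ) - t * Complex.I)) (𝓝[>] (0:ℝ)) (𝓝 θ2m) ∧
      Tendsto (fun t : ℝ => theta1 r₁ s₁ ((s:ℂ) + t * Complex.I)) (𝓝[>] (0:ℝ)) (𝓝 θ1p) ∧
      Tendsto (fun t : ℝ => theta1 r₁ s₁ ((s:ℂ) - t * Complex.I)) (𝓝[>] (0:ℝ)) (𝓝 θ1m) ∧
      (∃ F : ℂ → ℂ,
        AnalyticOnNhd ℂ F (Metric.ball (-1 : ℂ) ε) ∧
        (∀ z ∈ Metric.ball (-1 : ℂ) ε, 0 < z.im →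
          F z = -2 * Complex.I * ((s ^ (-(3:ℝ)/2) : ℝ) : ℂ) * (theta2 r₂ s₂ (s * z) - θ2p)) ∧
        (∀ z ∈ Metric.ball (-1 : ℂ) ε, z.im < 0 →
          F z = -2 * Complex.I * ((s ^ (-(3:ℝ)/2) : ℝ) : ℂ) * (-theta2 r₂ s₂ (s * z) + θ2m)) ∧
        F (-1) = 0 ∧
        (fun z : ℂ => F z - 2 * ((r₂ - s₂ / s : ℝ) : ℂ) * (z + 1))
          =O[𝓝 (-1 : ℂ)] (fun z : ℂ => (z + 1)^2)) ∧
      (∃ F : ℂ → ℂ,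
        AnalyticOnNhd ℂ F (Metric.ball (1 : ℂ) ε) ∧
        (∀ z ∈ Metric.ball (1 : ℂ) ε, 0 < z.im →
          F z = -2 * Complex.I * ((s ^ (-(3:ℝ)/2) : ℝ) : ℂ) * (theta1 r₁ s₁ (s * z) - θ1p)) ∧
        (∀ z ∈ Metric.ball (1 : ℂ) ε, z.im < 0 →
          F z = -2 * Complex.I * ((s ^ (-(3:ℝ)/2) : ℝ) : ℂ) * (-theta1 r₁ s₁ (s * z) + θ1m)) ∧
        F 1 = 0 ∧
        (fun z : ℂ => F z - 2 * ((r₁ - s₁ / s : ℝ) : ℂ) * (z - 1))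
          =O[𝓝 (1 : ℂ)] (fun z : ℂ => (z - 1)^2)) := by
  have hs0 : (s:ℂ) ≠ 0 := Complex.ofReal_ne_zero.2 hs.ne'
  set A : ℂ := (s:ℂ) ^ ((1:ℂ)/2) with hA
  set c : ℂ := ((s ^ (-(3:ℝ)/2) : ℝ) : ℂ) with hcdef
  have hs32 : (s:ℂ) ^ ((3:ℂ)/2) = A * s := my_three_half hs0
  have hcA : c * A = ((s:ℂ))⁻¹ := by
    have hAr : A = ((s ^ ((1:ℝ)/2) : ℝ) : ℂ) := by
      rw [hA, Complex.ofReal_cpow hs.le]; norm_num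
    have hreal : s ^ (-(3:ℝ)/2) * s ^ ((1:ℝ)/2) = s⁻¹ := by
      rw [← Real.rpow_add hs]
      norm_num
      rw [Real.rpow_neg_one]
    rw [hcdef, hAr, ← Complex.ofReal_mul, hreal, Complex.ofReal_inv]
  have hsinv : (s:ℂ) * ((s:ℂ))⁻¹ = 1 := mul_inv_cancel₀ hs0
  -- continuity of the boundary-value auxiliary functions
  have hslit_s : ∀ t : ℝ, ((s:ℂ) + t * I) ∈ Complex.slitPlane ∧ ((s:ℂ) - t * I) ∈ Complex.slitPlane := by
    intro t
    constructor <;> (rw [Complex.mem_slitPlane_iff]; left; simpa using hs)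
  have hpow_p : ContinuousAt (fun t : ℝ => ((s:ℂ) + t * I) ^ ((1:ℂ)/2)) 0 := by
    have h1 : ContinuousAt (fun t : ℝ => (s:ℂ) + t * I) 0 := by fun_prop
    have h2 : ContinuousAt (fun w : ℂ => w ^ ((1:ℂ)/2)) ((fun t : ℝ => (s:ℂ) + t * I) 0) := by
      apply continuousAt_cpow_const
      simpa using (hslit_s 0).1
    exact ContinuousAt.comp (f := fun t : ℝ => (s:ℂ) + t * I) (x := (0:ℝ)) h2 h1
  have hpow_m : ContinuousAt (fun t : ℝ => ((s:ℂ) - t * I) ^ ((1:ℂ)/2)) 0 := by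
    have h1 : ContinuousAt (fun t : ℝ => (s:ℂ) - t * I) 0 := by fun_prop
    have h2 : ContinuousAt (fun w : ℂ => w ^ ((1:ℂ)/2)) ((fun t : ℝ => (s:ℂ) - t * I) 0) := by
      apply continuousAt_cpow_const
      simpa using (hslit_s 0).2
    exact ContinuousAt.comp (f := fun t : ℝ => (s:ℂ) - t * I) (x := (0:ℝ)) h2 h1
  have hA0 : ((s:ℂ) + ((0:ℝ):ℂ) * I) = (s:ℂ) := by simp
  have hA0' : ((s:ℂ) - ((0:ℝ):ℂ) * I) = (s:ℂ) := by simp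
  refine ⟨-(2/3:ℂ)*r₂*I*(A*s) + 2*s₂*I*A, (2/3:ℂ)*r₂*I*(A*s) - 2*s₂*I*A,
    (2/3:ℂ)*r₁*I*(A*s) - 2*s₁*I*A, -(2/3:ℂ)*r₁*I*(A*s) + 2*s₁*I*A, ?_, ?_, ?_, ?_, ?_, ?_⟩
  · -- tendsto θ2p
    set g : ℝ → ℂ := fun t =>
      (2/3 : ℂ) * r₂ * (I * (((s:ℂ) - t * I) ^ ((1:ℂ)/2)) * ((-s:ℂ) + t * I))
        + 2 * s₂ * (I * (((s:ℂ) - t * I) ^ ((1:ℂ)/2))) with hg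
    have hcont : ContinuousAt g 0 :=
      ((continuousAt_const.mul ((continuousAt_const.mul hpow_m).mul (by fun_prop))).add
        (continuousAt_const.mul (continuousAt_const.mul hpow_m)))
    have hg0 : g 0 = -(2/3:ℂ)*r₂*I*(A*s) + 2*s₂*I*A := by
      rw [hg]
      simp only [Complex.ofReal_zero, zero_mul, sub_zero, add_zero, ← hA]
      ring
    refine Tendsto.congr' ?_ ((hg0 ▸ hcont.tendsto).mono_left nhdsWithin_le_nhds)
    filter_upwards [self_mem_nhdsWithin] with t (ht : 0 < t)
    have hwim : (0:ℝ) < ((-s:ℂ) + t * I).im := by simpa using ht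
    have hw0 : ((-s:ℂ) + t * I) ≠ 0 := my_ne_zero_of_im_pos hwim
    have him2 : (((s:ℂ) - t * I)).im < 0 := by simpa using ht
    have hz12 : ((-s:ℂ) + t * I) ^ ((1:ℂ)/2) = I * ((s:ℂ) - t * I) ^ ((1:ℂ)/2) := by
      have h2 := neg_cpow_half_neg him2
      rw [show ((-s:ℂ) + t * I) = -((s:ℂ) - t * I) by ring, h2]
    rw [hg, theta2, my_three_half hw0, hz12]
  · -- tendsto θ2m
    set g : ℝ → ℂ := fun t =>
      (2/3 : ℂ) * r₂ * ((-I) * (((s:ℂ) + t * I) ^ ((1:ℂ)/2)) * ((-s:ℂ) - t * I))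
        + 2 * s₂ * ((-I) * (((s:ℂ) + t * I) ^ ((1:ℂ)/2))) with hg
    have hcont : ContinuousAt g 0 :=
      ((continuousAt_const.mul ((continuousAt_const.mul hpow_p).mul (by fun_prop))).add
        (continuousAt_const.mul (continuousAt_const.mul hpow_p)))
    have hg0 : g 0 = (2/3:ℂ)*r₂*I*(A*s) - 2*s₂*I*A := by
      rw [hg]
      simp only [Complex.ofReal_zero, zero_mul, add_zero, sub_zero, ← hA]
      ring
    refine Tendsto.congr' ?_ ((hg0 ▸ hcont.tendsto).mono_left nhdsWithin_le_nhds)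
    filter_upwards [self_mem_nhdsWithin] with t (ht : 0 < t)
    have hwim : ((-s:ℂ) - t * I).im < 0 := by simpa using ht
    have hw0 : ((-s:ℂ) - t * I) ≠ 0 := my_ne_zero_of_im_neg hwim
    have him2 : (0:ℝ) < (((s:ℂ) + t * I)).im := by simpa using ht
    have hz12 : ((-s:ℂ) - t * I) ^ ((1:ℂ)/2) = -I * ((s:ℂ) + t * I) ^ ((1:ℂ)/2) := by
      have h2 := neg_cpow_half_pos him2
      rw [show ((-s:ℂ) - t * I) = -((s:ℂ) + t * I) by ring, h2]
    rw [hg, theta2, my_three_half hw0, hz12]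
  · -- tendsto θ1p
    set g : ℝ → ℂ := fun t =>
      (2/3 : ℂ) * r₁ * ((-I) * (((s:ℂ) + t * I) ^ ((1:ℂ)/2)) * (-((s:ℂ) + t * I)))
        + 2 * s₁ * ((-I) * (((s:ℂ) + t * I) ^ ((1:ℂ)/2))) with hg
    have hcont : ContinuousAt g 0 :=
      ((continuousAt_const.mul ((continuousAt_const.mul hpow_p).mul (by fun_prop))).add
        (continuousAt_const.mul (continuousAt_const.mul hpow_p)))
    have hg0 : g 0 = (2/3:ℂ)*r₁*I*(A*s) - 2*s₁*I*A := by
      rw [hg]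
      simp only [Complex.ofReal_zero, zero_mul, add_zero, ← hA]
      ring
    refine Tendsto.congr' ?_ ((hg0 ▸ hcont.tendsto).mono_left nhdsWithin_le_nhds)
    filter_upwards [self_mem_nhdsWithin] with t (ht : 0 < t)
    have hwim : (0:ℝ) < ((s:ℂ) + t * I).im := by simpa using ht
    have hw0 : -((s:ℂ) + t * I) ≠ 0 := neg_ne_zero.2 (my_ne_zero_of_im_pos hwim)
    have hz12 := neg_cpow_half_pos hwim
    rw [hg, theta1, my_three_half hw0, hz12]
  · -- tendsto θ1m
    set g : ℝ → ℂ := fun t =>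
      (2/3 : ℂ) * r₁ * (I * (((s:ℂ) - t * I) ^ ((1:ℂ)/2)) * (-((s:ℂ) - t * I)))
        + 2 * s₁ * (I * (((s:ℂ) - t * I) ^ ((1:ℂ)/2))) with hg
    have hcont : ContinuousAt g 0 :=
      ((continuousAt_const.mul ((continuousAt_const.mul hpow_m).mul (by fun_prop))).add
        (continuousAt_const.mul (continuousAt_const.mul hpow_m)))
    have hg0 : g 0 = -(2/3:ℂ)*r₁*I*(A*s) + 2*s₁*I*A := by
      rw [hg]
      simp only [Complex.ofReal_zero, zero_mul, sub_zero, ← hA]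
      ring
    refine Tendsto.congr' ?_ ((hg0 ▸ hcont.tendsto).mono_left nhdsWithin_le_nhds)
    filter_upwards [self_mem_nhdsWithin] with t (ht : 0 < t)
    have hwim : ((s:ℂ) - t * I).im < 0 := by simpa using ht
    have hw0 : -((s:ℂ) - t * I) ≠ 0 := neg_ne_zero.2 (my_ne_zero_of_im_neg hwim)
    have hz12 := neg_cpow_half_neg hwim
    rw [hg, theta1, my_three_half hw0, hz12]
  · -- the disc around -1
    refine ⟨fun z : ℂ => 2*c*(A*((2/3:ℂ)*r₂*((-z) ^ ((1:ℂ)/2))*s*z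
      + 2*(s₂:ℂ)*((-z) ^ ((1:ℂ)/2)) + (2/3:ℂ)*r₂*s - 2*(s₂:ℂ))), ?_, ?_, ?_, ?_, ?_⟩
    · -- analytic
      intro z hz
      have hre : 0 < (-z).re := by
        rw [Metric.mem_ball, Complex.dist_eq] at hz
        have h1 : |(z - (-1)).re| ≤ ‖z - (-1)‖ := Complex.abs_re_le_norm _
        have h2 : (z - (-1)).re = z.re + 1 := by simp
        simp only [Complex.neg_re]
        have := h1.trans_lt hz
        rw [h2, abs_lt] at this
        linarith
      have hb : AnalyticAt ℂ (fun z : ℂ => (-z) ^ ((1:ℂ)/2)) z := by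
        apply AnalyticAt.cpow _ analyticAt_const (Or.inl hre)
        exact analyticAt_id.neg
      exact analyticAt_const.mul (analyticAt_const.mul
        (((((analyticAt_const.mul hb).mul analyticAt_const).mul analyticAt_id).add
          (analyticAt_const.mul hb)).add analyticAt_const |>.sub analyticAt_const))
    · -- boundary values from above
      intro z hz hzim
      have hz0 : z ≠ 0 := my_ne_zero_of_im_pos hzim
      have hnz0 : -z ≠ 0 := neg_ne_zero.2 hz0
      have hwim : (0:ℝ) < ((s:ℂ) * z).im := by
        simp only [Complex.mul_im, Complex.ofReal_re, Complex.ofReal_im, zero_mul, add_zero]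
        exact mul_pos hs hzim
      have hw0 : (s:ℂ) * z ≠ 0 := mul_ne_zero hs0 hz0
      have hhalf : ((s:ℂ) * z) ^ ((1:ℂ)/2) = I * (A * (-z) ^ ((1:ℂ)/2)) := by
        have h2 := neg_cpow_half_neg (w := -((s:ℂ) * z)) (by simpa using hwim)
        rw [neg_neg] at h2
        rw [h2, show -((s:ℂ) * z) = (s:ℂ) * (-z) by ring, my_split hs hnz0, ← hA]
      have key : theta2 r₂ s₂ ((s:ℂ) * z) - (-(2/3:ℂ)*r₂*I*(A*s) + 2*s₂*I*A)
          = I * (A*((2/3:ℂ)*r₂*((-z) ^ ((1:ℂ)/2))*s*z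
            + 2*(s₂:ℂ)*((-z) ^ ((1:ℂ)/2)) + (2/3:ℂ)*r₂*s - 2*(s₂:ℂ))) := by
        rw [theta2, my_three_half hw0, hhalf]
        ring
      rw [key]
      linear_combination (2*c*(A*((2/3:ℂ)*r₂*((-z) ^ ((1:ℂ)/2))*s*z
        + 2*(s₂:ℂ)*((-z) ^ ((1:ℂ)/2)) + (2/3:ℂ)*r₂*s - 2*(s₂:ℂ)))) * Complex.I_mul_I
    · -- boundary values from below
      intro z hz hzim
      have hz0 : z ≠ 0 := my_ne_zero_of_im_neg hzim
      have hnz0 : -z ≠ 0 := neg_ne_zero.2 hz0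
      have hwim : ((s:ℂ) * z).im < 0 := by
        simp only [Complex.mul_im, Complex.ofReal_re, Complex.ofReal_im, zero_mul, add_zero]
        exact mul_neg_of_pos_of_neg hs hzim
      have hw0 : (s:ℂ) * z ≠ 0 := mul_ne_zero hs0 hz0
      have hhalf : ((s:ℂ) * z) ^ ((1:ℂ)/2) = -I * (A * (-z) ^ ((1:ℂ)/2)) := by
        have h2 := neg_cpow_half_pos (w := -((s:ℂ) * z)) (by simpa using hwim)
        rw [neg_neg] at h2
        rw [h2, show -((s:ℂ) * z) = (s:ℂ) * (-z) by ring, my_split hs hnz0, ← hA]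
      have key : -theta2 r₂ s₂ ((s:ℂ) * z) + ((2/3:ℂ)*r₂*I*(A*s) - 2*s₂*I*A)
          = I * (A*((2/3:ℂ)*r₂*((-z) ^ ((1:ℂ)/2))*s*z
            + 2*(s₂:ℂ)*((-z) ^ ((1:ℂ)/2)) + (2/3:ℂ)*r₂*s - 2*(s₂:ℂ))) := by
        rw [theta2, my_three_half hw0, hhalf]
        ring
      rw [key]
      linear_combination (2*c*(A*((2/3:ℂ)*r₂*((-z) ^ ((1:ℂ)/2))*s*z
        + 2*(s₂:ℂ)*((-z) ^ ((1:ℂ)/2)) + (2/3:ℂ)*r₂*s - 2*(s₂:ℂ)))) * Complex.I_mul_I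
    · -- value at -1
      show 2*c*(A*((2/3:ℂ)*r₂*((-(-1:ℂ)) ^ ((1:ℂ)/2))*s*(-1)
        + 2*(s₂:ℂ)*((-(-1:ℂ)) ^ ((1:ℂ)/2)) + (2/3:ℂ)*r₂*s - 2*(s₂:ℂ))) = 0
      rw [neg_neg, Complex.one_cpow]
      ring
    · -- big O
      have hu : HasDerivAt (fun z : ℂ => (-z) ^ ((1:ℂ)/2)) (-(1/2 : ℂ)) (-1) := by
        have hd := (hasDerivAt_neg (-1:ℂ)).cpow_const
          (c := (1:ℂ)/2) (show -(-1:ℂ) ∈ Complex.slitPlane by norm_num [Complex.mem_slitPlane_iff])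
        rw [neg_neg, Complex.one_cpow] at hd
        convert hd using 1
        ring
      have hchain := ((((((hu.const_mul ((2/3:ℂ)*(r₂:ℂ))).mul_const ((s:ℂ))).mul
        (hasDerivAt_id' (-1:ℂ))).add (hu.const_mul (2*(s₂:ℂ)))).add_const
        ((2/3:ℂ)*r₂*s)).sub_const (2*(s₂:ℂ))).const_mul A |>.const_mul (2*c)
      have hder : HasDerivAt (fun z : ℂ => 2*c*(A*((2/3:ℂ)*r₂*((-z) ^ ((1:ℂ)/2))*s*z
          + 2*(s₂:ℂ)*((-z) ^ ((1:ℂ)/2)) + (2/3:ℂ)*r₂*s - 2*(s₂:ℂ))))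
          (2 * ((r₂ - s₂ / s : ℝ) : ℂ)) (-1) := by
        refine hchain.congr_deriv ?_
        symm
        rw [neg_neg, Complex.one_cpow]
        push_cast
        linear_combination (2*(s₂:ℂ) - 2*(r₂:ℂ)*(s:ℂ)) * hcA - 2*(r₂:ℂ) * hsinv
      have hAn : AnalyticAt ℂ (fun z : ℂ => 2*c*(A*((2/3:ℂ)*r₂*((-z) ^ ((1:ℂ)/2))*s*z
          + 2*(s₂:ℂ)*((-z) ^ ((1:ℂ)/2)) + (2/3:ℂ)*r₂*s - 2*(s₂:ℂ)))) (-1) := by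
        have hb : AnalyticAt ℂ (fun z : ℂ => (-z) ^ ((1:ℂ)/2)) (-1:ℂ) := by
          apply AnalyticAt.cpow _ analyticAt_const
          · rw [neg_neg]; exact Or.inl (by norm_num)
          · exact analyticAt_id.neg
        exact analyticAt_const.mul (analyticAt_const.mul
          (((((analyticAt_const.mul hb).mul analyticAt_const).mul analyticAt_id).add
            (analyticAt_const.mul hb)).add analyticAt_const |>.sub analyticAt_const))
      have hO := my_taylor2 hAn
      rw [hder.deriv] at hO
      refine hO.congr (fun z => ?_) (fun z => ?_)
      · simp only [neg_neg, Complex.one_cpow]; ring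
      · ring
  · -- the disc around 1
    refine ⟨fun z : ℂ => 2*c*(A*((2/3:ℂ)*r₁*(z ^ ((1:ℂ)/2))*s*z
      - 2*(s₁:ℂ)*(z ^ ((1:ℂ)/2)) - (2/3:ℂ)*r₁*s + 2*(s₁:ℂ))), ?_, ?_, ?_, ?_, ?_⟩
    · -- analytic
      intro z hz
      have hre : 0 < z.re := by
        rw [Metric.mem_ball, Complex.dist_eq] at hz
        have h1 : |(z - 1).re| ≤ ‖z - 1‖ := Complex.abs_re_le_norm _
        have h2 : (z - 1).re = z.re - 1 := by simp
        have := h1.trans_lt hz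
        rw [h2, abs_lt] at this
        linarith
      have hb : AnalyticAt ℂ (fun z : ℂ => z ^ ((1:ℂ)/2)) z :=
        AnalyticAt.cpow analyticAt_id analyticAt_const (Or.inl hre)
      exact analyticAt_const.mul (analyticAt_const.mul
        (((((analyticAt_const.mul hb).mul analyticAt_const).mul analyticAt_id).sub
          (analyticAt_const.mul hb)).sub analyticAt_const |>.add analyticAt_const))
    · -- boundary values from above
      intro z hz hzim
      have hz0 : z ≠ 0 := my_ne_zero_of_im_pos hzim
      have hwim : (0:ℝ) < ((s:ℂ) * z).im := by
        simp only [Complex.mul_im, Complex.ofReal_re, Complex.ofReal_im, zero_mul, add_zero]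
        exact mul_pos hs hzim
      have hw0 : (s:ℂ) * z ≠ 0 := mul_ne_zero hs0 hz0
      have hnw0 : -((s:ℂ) * z) ≠ 0 := neg_ne_zero.2 hw0
      have hhalf : (-((s:ℂ) * z)) ^ ((1:ℂ)/2) = -I * (A * z ^ ((1:ℂ)/2)) := by
        rw [neg_cpow_half_pos hwim, my_split hs hz0, ← hA]
      have key : theta1 r₁ s₁ ((s:ℂ) * z) - ((2/3:ℂ)*r₁*I*(A*s) - 2*s₁*I*A)
          = I * (A*((2/3:ℂ)*r₁*(z ^ ((1:ℂ)/2))*s*z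
            - 2*(s₁:ℂ)*(z ^ ((1:ℂ)/2)) - (2/3:ℂ)*r₁*s + 2*(s₁:ℂ))) := by
        rw [theta1, my_three_half hnw0, hhalf]
        ring
      rw [key]
      linear_combination (2*c*(A*((2/3:ℂ)*r₁*(z ^ ((1:ℂ)/2))*s*z
        - 2*(s₁:ℂ)*(z ^ ((1:ℂ)/2)) - (2/3:ℂ)*r₁*s + 2*(s₁:ℂ)))) * Complex.I_mul_I
    · -- boundary values from below
      intro z hz hzim
      have hz0 : z ≠ 0 := my_ne_zero_of_im_neg hzim
      have hwim : ((s:ℂ) * z).im < 0 := by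
        simp only [Complex.mul_im, Complex.ofReal_re, Complex.ofReal_im, zero_mul, add_zero]
        exact mul_neg_of_pos_of_neg hs hzim
      have hw0 : (s:ℂ) * z ≠ 0 := mul_ne_zero hs0 hz0
      have hnw0 : -((s:ℂ) * z) ≠ 0 := neg_ne_zero.2 hw0
      have hhalf : (-((s:ℂ) * z)) ^ ((1:ℂ)/2) = I * (A * z ^ ((1:ℂ)/2)) := by
        rw [neg_cpow_half_neg hwim, my_split hs hz0, ← hA]
      have key : -theta1 r₁ s₁ ((s:ℂ) * z) + (-(2/3:ℂ)*r₁*I*(A*s) + 2*s₁*I*A)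
          = I * (A*((2/3:ℂ)*r₁*(z ^ ((1:ℂ)/2))*s*z
            - 2*(s₁:ℂ)*(z ^ ((1:ℂ)/2)) - (2/3:ℂ)*r₁*s + 2*(s₁:ℂ))) := by
        rw [theta1, my_three_half hnw0, hhalf]
        ring
      rw [key]
      linear_combination (2*c*(A*((2/3:ℂ)*r₁*(z ^ ((1:ℂ)/2))*s*z
        - 2*(s₁:ℂ)*(z ^ ((1:ℂ)/2)) - (2/3:ℂ)*r₁*s + 2*(s₁:ℂ)))) * Complex.I_mul_I
    · -- value at 1
      show 2*c*(A*((2/3:ℂ)*r₁*((1:ℂ) ^ ((1:ℂ)/2))*s*(1:ℂ)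
        - 2*(s₁:ℂ)*((1:ℂ) ^ ((1:ℂ)/2)) - (2/3:ℂ)*r₁*s + 2*(s₁:ℂ))) = 0
      rw [Complex.one_cpow]
      ring
    · -- big O
      have hu : HasDerivAt (fun z : ℂ => z ^ ((1:ℂ)/2)) ((1/2 : ℂ)) (1:ℂ) := by
        have hd := Complex.hasStrictDerivAt_cpow_const
          (c := (1:ℂ)/2) (show (1:ℂ) ∈ Complex.slitPlane by norm_num [Complex.mem_slitPlane_iff])
        have hd2 := hd.hasDerivAt
        rw [Complex.one_cpow] at hd2
        simpa using hd2
      have hchain := ((((((hu.const_mul ((2/3:ℂ)*(r₁:ℂ))).mul_const ((s:ℂ))).mul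
        (hasDerivAt_id' (1:ℂ))).sub (hu.const_mul (2*(s₁:ℂ)))).sub_const
        ((2/3:ℂ)*r₁*s)).add_const (2*(s₁:ℂ))).const_mul A |>.const_mul (2*c)
      have hder : HasDerivAt (fun z : ℂ => 2*c*(A*((2/3:ℂ)*r₁*(z ^ ((1:ℂ)/2))*s*z
          - 2*(s₁:ℂ)*(z ^ ((1:ℂ)/2)) - (2/3:ℂ)*r₁*s + 2*(s₁:ℂ))))
          (2 * ((r₁ - s₁ / s : ℝ) : ℂ)) (1:ℂ) := by
        refine hchain.congr_deriv ?_
        symm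
        rw [Complex.one_cpow]
        push_cast
        linear_combination (2*(s₁:ℂ) - 2*(r₁:ℂ)*(s:ℂ)) * hcA - 2*(r₁:ℂ) * hsinv
      have hAn : AnalyticAt ℂ (fun z : ℂ => 2*c*(A*((2/3:ℂ)*r₁*(z ^ ((1:ℂ)/2))*s*z
          - 2*(s₁:ℂ)*(z ^ ((1:ℂ)/2)) - (2/3:ℂ)*r₁*s + 2*(s₁:ℂ)))) (1:ℂ) := by
        have hb : AnalyticAt ℂ (fun z : ℂ => z ^ ((1:ℂ)/2)) (1:ℂ) :=
          AnalyticAt.cpow analyticAt_id analyticAt_const (Or.inl (by norm_num))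
        exact analyticAt_const.mul (analyticAt_const.mul
          (((((analyticAt_const.mul hb).mul analyticAt_const).mul analyticAt_id).sub
            (analyticAt_const.mul hb)).sub analyticAt_const |>.add analyticAt_const))
      have hO := my_taylor2 hAn
      rw [hder.deriv] at hO
      refine hO.congr (fun z => ?_) (fun z => ?_)
      · simp only [Complex.one_cpow]; ring
      · ring
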